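/- Let (R, m) be a commutative local ring with m² = 0. Then every finitely generated ideal of R is quasi-projective (R is an fqp-ring). -/

import Mathlib

universe u v

/-- A chained (valuation) ring: the ideals are totally ordered by inclusion. -/
def IsChainedRing (R : Type*) [CommRing R] : Prop :=
  ∀ I J : Ideal R, I ≤ J ∨ J ≤ I

/-- `R` has zero divisors. -/
def HasZeroDivisors (R : Type*) [CommRing R] : Prop :=
  ∃ a b : R, a ≠ 0 ∧ b ≠ 0 ∧ a * b = 0

/-- An arithmetical ring: the localization at every maximal ideal is a chained ring. -/
def IsArithmetical (R : Type*) [CommRing R] : Prop :=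
  ∀ (P : Ideal R) (hP : P.IsMaximal),
    letI := hP.isPrime
    ∀ I J : Ideal (Localization.AtPrime P), I ≤ J ∨ J ≤ I

/-- `FlatDimLE R n M` : the flat (weak) dimension of `M` is at most `n`. -/
def FlatDimLE (R : Type u) [CommRing R] : ℕ → ModuleCat.{u} R → Prop
  | 0, M => Module.Flat R M
  | (n+1), M => ∃ (F : ModuleCat.{u} R) (f : F →ₗ[R] M), Function.Surjective f ∧
      Module.Flat R F ∧ FlatDimLE R n (ModuleCat.of R (LinearMap.ker f))

/-- The flat (weak) dimension of a module, valued in `ℕ∞` (`⊤` if no finite flat resolution). -/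
noncomputable def flatDim (R : Type u) [CommRing R] (M : ModuleCat.{u} R) : ℕ∞ :=
  sInf {n : ℕ∞ | ∃ k : ℕ, n = (k : ℕ∞) ∧ FlatDimLE R k M}

/-- The weak global dimension of `R` is at most `n`. -/
def WgdimLE (R : Type u) [CommRing R] (n : ℕ) : Prop :=
  ∀ M : ModuleCat.{u} R, FlatDimLE R n M

/-- The weak global dimension of `R` is infinite. -/
def HasInfiniteWeakGlobalDimension (R : Type u) [CommRing R] : Prop :=
  ∀ n : ℕ, ∃ M : ModuleCat.{u} R, ¬ FlatDimLE R n M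

/-- The content ideal of a polynomial: the ideal generated by its coefficients. -/
def contentIdeal {R : Type*} [CommRing R] (f : Polynomial R) : Ideal R :=
  Ideal.span (Set.range f.coeff)

/-- A Gaussian ring: `c(fg) = c(f)c(g)` for all polynomials. -/
def IsGaussian (R : Type*) [CommRing R] : Prop :=
  ∀ f g : Polynomial R, contentIdeal (f * g) = contentIdeal f * contentIdeal g

/-- A Prüfer ring: every finitely generated regular ideal is invertible. -/
def IsPruferRing (R : Type u) [CommRing R] : Prop :=
  ∀ I : Ideal R, I.FG → (∃ x ∈ I, x ∈ nonZeroDivisors R) →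
    IsUnit (I : FractionalIdeal (nonZeroDivisors R) (FractionRing R))

/-- A quasi-projective module: every map to a quotient of `M` lifts to an endomorphism. -/
def IsQuasiProjective (R : Type u) [CommRing R] (M : Type v) [AddCommGroup M] [Module R M] : Prop :=
  ∀ (N : Submodule R M) (g : M →ₗ[R] M ⧸ N), ∃ h : M →ₗ[R] M, N.mkQ.comp h = g

/-- A local ring `(R, m)` with `m² = 0` is an fqp-ring: every finitely
generated ideal is quasi-projective. -/
theorem stmt_19 (R : Type u) [CommRing R] [IsLocalRing R]
    (h : IsLocalRing.maximalIdeal R ^ 2 = ⊥) :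
    ∀ I : Ideal R, I.FG → IsQuasiProjective R ↥I := by
  intro I _hfg N g
  by_cases hI : I = ⊤
  · -- `I = R` is projective, so the lifting exists.
    haveI : Module.Projective R ↥I :=
      Module.Projective.of_equiv (LinearEquiv.ofTop I hI).symm
    exact Module.projective_lifting_property N.mkQ g (Submodule.mkQ_surjective N)
  · -- `I ≤ m`, so `m • I ⊆ m² = 0` and `I` is a vector space over `R ⧸ m`,
    -- hence a semisimple `R`-module; every submodule of `I` has a complement.
    have hle : I ≤ IsLocalRing.maximalIdeal R := IsLocalRing.le_maximalIdeal hI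
    have hT : Module.IsTorsionBySet R ↥I (IsLocalRing.maximalIdeal R) := by
      intro x r
      have hx : (r : R) * (x : R) = 0 := by
        have hmem : (r : R) * (x : R) ∈ IsLocalRing.maximalIdeal R ^ 2 := by
          rw [pow_two]; exact Ideal.mul_mem_mul r.2 (hle x.2)
        rwa [h, Ideal.mem_bot] at hmem
      ext
      simpa [smul_eq_mul] using hx
    letI : Module (R ⧸ IsLocalRing.maximalIdeal R) ↥I := hT.module
    haveI : IsSemisimpleModule R ↥I := by
      letI : Field (R ⧸ IsLocalRing.maximalIdeal R) :=
        Ideal.Quotient.field (IsLocalRing.maximalIdeal R)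
      let σ := Ideal.Quotient.mk (IsLocalRing.maximalIdeal R)
      haveI : RingHomSurjective σ := ⟨Ideal.Quotient.mk_surjective⟩
      let l : ↥I →ₛₗ[σ] ↥I :=
        { toFun := id, map_add' := fun _ _ => rfl,
          map_smul' := fun r x => rfl }
      exact (l.isSemisimpleModule_iff_of_bijective Function.bijective_id).mpr inferInstance
    obtain ⟨N', hc⟩ := exists_isCompl N
    refine ⟨N'.subtype ∘ₗ (Submodule.quotientEquivOfIsCompl N N' hc).toLinearMap ∘ₗ g, ?_⟩
    ext x
    exact Submodule.mk_quotientEquivOfIsCompl_apply hc (g x)
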